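/- Let σ' be the automorphism of the curve E = V(x) ∪ V(x² − λyz) ⊂ P² (λ = (α³−1)/α) given by σ'(0:b:c) = (0:b:αc) on the line and σ'(a:b:c) = (a:αb:α⁻¹c) on the conic. Then for every i ≥ 1, the i-th iterate (σ')^i extends to an automorphism of P² (i.e. (σ')^i ∈ Aut_k(P², E)) if and only if α^{3i} = 1. Consequently the norm ‖σ'‖ equals the multiplicative order of α³. -/

import Mathlib

noncomputable section
open scoped Classical

/-- The automorphism `σ'` of the Type S' curve `E = V(x) ∪ V(x² - λyz)`, described on
(representing vectors of) points: `σ'(0:b:c) = (0:b:αc)` on the line and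
`σ'(a:b:c) = (a:αb:α⁻¹c)` on the conic. -/
def sAct {k : Type} [Field k] (α : k) (v : Fin 3 → k) : Fin 3 → k :=
  if v 0 = 0 then ![0, v 1, α * v 2] else ![v 0, α * v 1, α⁻¹ * v 2]

/-- `(σ')^i` extends to an automorphism of `ℙ²`, i.e. there is a linear automorphism of `ℙ²`
agreeing with `(σ')^i` on all points of `E = V(x) ∪ V(x² - λyz)` (with `λ = (α³-1)/α`). -/
def extendsToP2 {k : Type} [Field k] (α : k) (i : ℕ) : Prop :=
  ∃ M : GL (Fin 3) k, ∀ v : Fin 3 → k, v ≠ 0 →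
    (v 0 = 0 ∨ (v 0) ^ 2 = ((α ^ 3 - 1) / α) * (v 1) * (v 2)) →
      ∃ c : k, c ≠ 0 ∧ (M : Matrix (Fin 3) (Fin 3) k).mulVec v = c • ((sAct α)^[i] v)

lemma sAct_iter_line {k : Type} [Field k] (α : k) (v : Fin 3 → k) (hv : v 0 = 0) (i : ℕ) :
    (sAct α)^[i] v = ![0, v 1, α ^ i * v 2] := by
  induction i with
  | zero => funext j; fin_cases j <;> simp [hv]
  | succ n ih =>
    rw [Function.iterate_succ_apply', ih, sAct, if_pos (show (![0, v 1, α ^ n * v 2] : Fin 3 → k) 0 = 0 by simp)]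
    funext j; fin_cases j <;> simp <;> ring

lemma sAct_iter_conic {k : Type} [Field k] (α : k) (v : Fin 3 → k) (hv : v 0 ≠ 0) (i : ℕ) :
    (sAct α)^[i] v = ![v 0, α ^ i * v 1, α⁻¹ ^ i * v 2] := by
  induction i with
  | zero => funext j; fin_cases j <;> simp
  | succ n ih =>
    rw [Function.iterate_succ_apply', ih, sAct, if_neg (show ¬(![v 0, α ^ n * v 1, α⁻¹ ^ n * v 2] : Fin 3 → k) 0 = 0 by simpa using hv)]
    funext j; fin_cases j <;> simp <;> ring

lemma fwd {k : Type} [Field k] (α : k) (hα : α ≠ 0) (i : ℕ) (h1 : α ^ (3 * i) = 1) :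
    extendsToP2 α i := by
  have hAB : α ^ i * α⁻¹ ^ i = 1 := by
    rw [← mul_pow, mul_inv_cancel₀ hα, one_pow]
  have hBA : α⁻¹ ^ i * α ^ i = 1 := by rw [mul_comm]; exact hAB
  have hinv : (Matrix.diagonal ![1, α ^ i, α⁻¹ ^ i] : Matrix (Fin 3) (Fin 3) k) *
      Matrix.diagonal ![1, α⁻¹ ^ i, α ^ i] = 1 := by
    ext j l
    fin_cases j <;> fin_cases l <;>
      simp [Matrix.mul_apply, Fin.sum_univ_three, Matrix.diagonal, hAB, hBA, mul_inv_cancel₀ (pow_ne_zero i hα), inv_mul_cancel₀ (pow_ne_zero i hα)]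
  have hinv' : (Matrix.diagonal ![1, α⁻¹ ^ i, α ^ i] : Matrix (Fin 3) (Fin 3) k) *
      Matrix.diagonal ![1, α ^ i, α⁻¹ ^ i] = 1 := by
    ext j l
    fin_cases j <;> fin_cases l <;>
      simp [Matrix.mul_apply, Fin.sum_univ_three, Matrix.diagonal, hAB, hBA, mul_inv_cancel₀ (pow_ne_zero i hα), inv_mul_cancel₀ (pow_ne_zero i hα)]
  refine ⟨⟨Matrix.diagonal ![1, α ^ i, α⁻¹ ^ i], Matrix.diagonal ![1, α⁻¹ ^ i, α ^ i],
    hinv, hinv'⟩, ?_⟩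
  intro v hv _
  have key : α⁻¹ ^ i = α ^ i * α ^ i := by
    have h2 : (α ^ i * α ^ i) * α ^ i = 1 := by
      rw [← pow_add, ← pow_add, show i + i + i = 3 * i by ring]; exact h1
    rw [inv_pow]
    exact (eq_inv_of_mul_eq_one_left h2).symm
  by_cases h0 : v 0 = 0
  · refine ⟨α ^ i, pow_ne_zero _ hα, ?_⟩
    rw [sAct_iter_line α v h0]
    funext j
    rw [Matrix.mulVec_diagonal]
    fin_cases j <;> simp [h0, key] <;> ring
  · refine ⟨1, one_ne_zero, ?_⟩
    rw [sAct_iter_conic α v h0]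
    funext j
    rw [Matrix.mulVec_diagonal]
    fin_cases j <;> simp

lemma bwd {k : Type} [Field k] [CharZero k] (α : k) (hα : α ≠ 0) (hα3 : α ^ 3 ≠ 1)
    (i : ℕ) (h : extendsToP2 α i) : α ^ (3 * i) = 1 := by
  obtain ⟨M, hM⟩ := h
  set l : k := (α ^ 3 - 1) / α with hl
  have hlne : l ≠ 0 := by
    rw [hl, div_ne_zero_iff]
    exact ⟨sub_ne_zero_of_ne hα3, hα⟩
  -- the points
  have h1 := hM ![0, 1, 0] (by intro h; simpa using congrFun h 1) (Or.inl (by simp))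
  have h2 := hM ![0, 0, 1] (by intro h; simpa using congrFun h 2) (Or.inl (by simp))
  have h3 := hM ![0, 1, 1] (by intro h; simpa using congrFun h 1) (Or.inl (by simp))
  have h4 := hM ![1, 1, l⁻¹] (by intro h; simpa using congrFun h 0)
    (Or.inr (by simp [mul_inv_cancel₀ hlne]))
  have h5 := hM ![1, -1, -l⁻¹] (by intro h; simpa using congrFun h 0)
    (Or.inr (by simp [mul_inv_cancel₀ hlne]))
  obtain ⟨c1, hc1, e1⟩ := h1
  obtain ⟨c2, hc2, e2⟩ := h2
  obtain ⟨c3, hc3, e3⟩ := h3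
  obtain ⟨d1, hd1, e4⟩ := h4
  obtain ⟨d2, hd2, e5⟩ := h5
  rw [sAct_iter_line α _ (by simp) i] at e1 e2 e3
  rw [sAct_iter_conic α _ (by simp) i] at e4
  rw [sAct_iter_conic α _ (by simp) i] at e5
  -- component equations
  have E : ∀ (w : Fin 3 → k) (c : k) (t : Fin 3 → k), Matrix.mulVec (M : Matrix (Fin 3) (Fin 3) k) w = c • t →
      ∀ j, (M : Matrix (Fin 3) (Fin 3) k) j 0 * w 0 + (M : Matrix (Fin 3) (Fin 3) k) j 1 * w 1
        + (M : Matrix (Fin 3) (Fin 3) k) j 2 * w 2 = c * t j := by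
    intro w c t hw j
    have := congrFun hw j
    simpa [Matrix.mulVec, dotProduct, Fin.sum_univ_three] using this
  have A1 := E _ _ _ e1; have A2 := E _ _ _ e2; have A3 := E _ _ _ e3
  have A4 := E _ _ _ e4; have A5 := E _ _ _ e5
  have A10 := A1 0; have A11 := A1 1; have A12 := A1 2
  have A20 := A2 0; have A21 := A2 1; have A22 := A2 2
  have A31 := A3 1; have A32 := A3 2
  have A40 := A4 0; have A41 := A4 1; have A42 := A4 2
  have A50 := A5 0; have A51 := A5 1; have A52 := A5 2
  simp only [Matrix.cons_val_zero, Matrix.cons_val_one, Matrix.head_cons,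
    Matrix.cons_val_two, Matrix.tail_cons, mul_zero, mul_one, add_zero, zero_add,
    mul_neg, neg_mul] at A10 A11 A12 A20 A21 A22 A31 A32 A40 A41 A42 A50 A51 A52
  have hAne : (α : k) ^ i ≠ 0 := pow_ne_zero _ hα
  have hdd : d1 = d2 := by linear_combination -A40 + A50 + 2*A10 + (2*l⁻¹)*A20
  have hc13 : c1 = c3 := by linear_combination A31 - A11 - A21
  have hc23 : c2 * α ^ i = c3 * α ^ i := by linear_combination A32 - A12 - A22
  have hc2c1 : c2 = c1 := by
    have h := mul_right_cancel₀ hAne hc23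
    rw [h, ← hc13]
  have hca : c1 = d1 * α ^ i := by
    have h2 : (2:k) * c1 = 2 * (d1 * α ^ i) := by
      linear_combination A41 - A51 - 2*A11 - (2*l⁻¹)*A21 - (α ^ i)*hdd
    exact mul_left_cancel₀ two_ne_zero h2
  have hcb : c1 * α ^ i = d1 * α⁻¹ ^ i := by
    have h2 : (2:k) * (c1 * α ^ i * l⁻¹) = 2 * (d1 * α⁻¹ ^ i * l⁻¹) := by
      linear_combination A42 - A52 - 2*A12 - (2*l⁻¹)*A22 - (α⁻¹ ^ i * l⁻¹)*hdd
        - (2 * α ^ i * l⁻¹)*hc2c1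
    exact mul_right_cancel₀ (inv_ne_zero hlne) (mul_left_cancel₀ two_ne_zero h2)
  have hAA : α ^ i * α ^ i = α⁻¹ ^ i := by
    refine mul_left_cancel₀ hd1 ?_
    linear_combination hcb - (α ^ i)*hca
  calc α ^ (3 * i) = α ^ i * α ^ i * α ^ i := by
        rw [show 3*i = i+i+i by ring, pow_add, pow_add]
    _ = α⁻¹ ^ i * α ^ i := by rw [hAA]
    _ = 1 := by rw [← mul_pow, inv_mul_cancel₀ hα, one_pow]

theorem stmt15 {k : Type} [Field k] [IsAlgClosed k] [CharZero k] (α : k)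
    (hα : α ≠ 0) (hα3 : α ^ 3 ≠ 1) :
    (∀ i : ℕ, 1 ≤ i → (extendsToP2 α i ↔ α ^ (3 * i) = 1)) ∧
    sInf {i : ℕ | 1 ≤ i ∧ extendsToP2 α i} = orderOf (α ^ 3) := by
  have hiff : ∀ i : ℕ, 1 ≤ i → (extendsToP2 α i ↔ α ^ (3 * i) = 1) := fun i _ =>
    ⟨fun h => bwd α hα hα3 i h, fun h => fwd α hα i h⟩
  refine ⟨hiff, ?_⟩
  have hset : {i : ℕ | 1 ≤ i ∧ extendsToP2 α i} = {i : ℕ | 1 ≤ i ∧ (α ^ 3) ^ i = 1} := by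
    ext i
    simp only [Set.mem_setOf_eq, ← pow_mul]
    exact and_congr_right fun hi => hiff i hi
  rw [hset]
  by_cases ho : orderOf (α ^ 3) = 0
  · have : {i : ℕ | 1 ≤ i ∧ (α ^ 3) ^ i = 1} = ∅ := by
      ext i
      simp only [Set.mem_setOf_eq, Set.mem_empty_iff_false, iff_false, not_and]
      intro hi hpow
      have := orderOf_dvd_of_pow_eq_one hpow
      rw [ho] at this
      omega
    rw [this, Nat.sInf_empty, ho]
  · have hpos : 0 < orderOf (α ^ 3) := Nat.pos_of_ne_zero ho
    have hmem : orderOf (α ^ 3) ∈ {i : ℕ | 1 ≤ i ∧ (α ^ 3) ^ i = 1} :=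
      ⟨hpos, pow_orderOf_eq_one _⟩
    refine le_antisymm (Nat.sInf_le hmem) ?_
    have hmem' := Nat.sInf_mem (⟨_, hmem⟩ : {i : ℕ | 1 ≤ i ∧ (α ^ 3) ^ i = 1}.Nonempty)
    obtain ⟨h1, h2⟩ := hmem'
    exact Nat.le_of_dvd h1 (orderOf_dvd_of_pow_eq_one h2)
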